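/- Independence of the reference event: let ξ be a future-pointing timelike worldline and x an event with the property that there exist λ ∈ (0,1) and τ₀ such that |x⃗ − ξ⃗(τ)| / (x⁰ − ξ⁰(τ)) < λ for all τ_min < τ < τ₀. Then for every event y ∈ ℝ⁴ and every μ with λ < μ < 1 there exists τ̂₀ such that |y⃗ − ξ⃗(τ)| / (y⁰ − ξ⁰(τ)) < μ for all τ_min < τ < τ̂₀; in particular y lies in the chronological future of the worldline. -/

import Mathlib

/-- The Minkowski bilinear form on ℝ⁴ with signature (−,+,+,+). -/
def mink (u v : Fin 4 → ℝ) : ℝ := -(u 0 * v 0) + u 1 * v 1 + u 2 * v 2 + u 3 * v 3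

/-- Triangle inequality for the Euclidean norm on ℝ³, written with square roots. -/
lemma n3_tri (a₁ b₁ c₁ a₂ b₂ c₂ : ℝ) :
    Real.sqrt ((a₁+a₂)^2 + (b₁+b₂)^2 + (c₁+c₂)^2) ≤
      Real.sqrt (a₁^2+b₁^2+c₁^2) + Real.sqrt (a₂^2+b₂^2+c₂^2) := by
  have h := norm_add_le (E := EuclideanSpace ℝ (Fin 3)) !₂[a₁,b₁,c₁] !₂[a₂,b₂,c₂]
  simpa [EuclideanSpace.norm_eq, Fin.sum_univ_three, Real.norm_eq_abs, sq_abs,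
    add_assoc] using h

set_option maxHeartbeats 1000000 in
/-- Independence of the reference event: if the worldline is bounded away from the
past light-cone of one event x (with ratio bound λ < 1), then for every event y and
every μ with λ < μ < 1 the analogous bound holds near τ_min; in particular y lies in
the chronological future of the worldline. -/
theorem bounded_away_reference_independent (τmin τmax : ℝ) (ξ ξd : ℝ → Fin 4 → ℝ)
    (hderiv : ∀ τ ∈ Set.Ioo τmin τmax, ∀ i, HasDerivAt (fun t => ξ t i) (ξd τ i) τ)
    (hunit : ∀ τ ∈ Set.Ioo τmin τmax, mink (ξd τ) (ξd τ) = -1)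
    (hfutvel : ∀ τ ∈ Set.Ioo τmin τmax, 0 < ξd τ 0)
    (hbot : Filter.Tendsto (fun τ => ξ τ 0) (nhdsWithin τmin (Set.Ioi τmin)) Filter.atBot)
    (x : Fin 4 → ℝ) (lam : ℝ) (hlam0 : 0 < lam) (hlam1 : lam < 1)
    (τ₀ : ℝ) (hτ₀ : τmin < τ₀) (hτ₀' : τ₀ ≤ τmax)
    (hx : ∀ τ, τmin < τ → τ < τ₀ →
        0 < x 0 - ξ τ 0 ∧
        Real.sqrt ((x 1 - ξ τ 1) ^ 2 + (x 2 - ξ τ 2) ^ 2 + (x 3 - ξ τ 3) ^ 2)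
            / (x 0 - ξ τ 0) < lam)
    (y : Fin 4 → ℝ) (μ : ℝ) (hμ1 : lam < μ) (hμ2 : μ < 1) :
    (∃ τh₀, τmin < τh₀ ∧ ∀ τ, τmin < τ → τ < τh₀ →
        0 < y 0 - ξ τ 0 ∧
        Real.sqrt ((y 1 - ξ τ 1) ^ 2 + (y 2 - ξ τ 2) ^ 2 + (y 3 - ξ τ 3) ^ 2)
            / (y 0 - ξ τ 0) < μ) ∧
      (∃ τ, τmin < τ ∧ τ < τmax ∧
        mink (fun i => y i - ξ τ i) (fun i => y i - ξ τ i) < 0 ∧ ξ τ 0 < y 0) := by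
  have hml : 0 < μ - lam := by linarith
  set A : ℝ := Real.sqrt ((y 1 - x 1)^2 + (y 2 - x 2)^2 + (y 3 - x 3)^2) with hA
  set M : ℝ := min ((μ * y 0 - lam * x 0 - A) / (μ - lam)) (y 0 - 1) with hM
  -- eventually ξ⁰ τ < M near τmin from the right
  have hev : ∀ᶠ τ in nhdsWithin τmin (Set.Ioi τmin), ξ τ 0 < M :=
    hbot.eventually (Filter.eventually_lt_atBot M)
  rw [Filter.eventually_iff, mem_nhdsGT_iff_exists_Ioo_subset] at hev
  obtain ⟨u, hu, hsub⟩ := hev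
  set τh₀ : ℝ := min u τ₀ with hτh
  have hτh₀ : τmin < τh₀ := lt_min hu hτ₀
  -- main bound for every τ in (τmin, τh₀)
  have main : ∀ τ, τmin < τ → τ < τh₀ →
      0 < y 0 - ξ τ 0 ∧
      Real.sqrt ((y 1 - ξ τ 1) ^ 2 + (y 2 - ξ τ 2) ^ 2 + (y 3 - ξ τ 3) ^ 2)
          / (y 0 - ξ τ 0) < μ := by
    intro τ h1 h2
    have hτu : τ < u := lt_of_lt_of_le h2 (min_le_left _ _)
    have hττ₀ : τ < τ₀ := lt_of_lt_of_le h2 (min_le_right _ _)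
    have hξM : ξ τ 0 < M := hsub ⟨h1, hτu⟩
    have hξM1 : ξ τ 0 < (μ * y 0 - lam * x 0 - A) / (μ - lam) :=
      lt_of_lt_of_le hξM (min_le_left _ _)
    have hξM2 : ξ τ 0 < y 0 - 1 := lt_of_lt_of_le hξM (min_le_right _ _)
    have hd0 : 0 < y 0 - ξ τ 0 := by linarith
    refine ⟨hd0, ?_⟩
    obtain ⟨hs, hratio⟩ := hx τ h1 hττ₀
    have hSx : Real.sqrt ((x 1 - ξ τ 1) ^ 2 + (x 2 - ξ τ 2) ^ 2 + (x 3 - ξ τ 3) ^ 2)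
        < lam * (x 0 - ξ τ 0) := by
      rwa [div_lt_iff₀ hs] at hratio
    have htri : Real.sqrt ((y 1 - ξ τ 1) ^ 2 + (y 2 - ξ τ 2) ^ 2 + (y 3 - ξ τ 3) ^ 2)
        ≤ A + Real.sqrt ((x 1 - ξ τ 1) ^ 2 + (x 2 - ξ τ 2) ^ 2 + (x 3 - ξ τ 3) ^ 2) := by
      have h := n3_tri (y 1 - x 1) (y 2 - x 2) (y 3 - x 3)
        (x 1 - ξ τ 1) (x 2 - ξ τ 2) (x 3 - ξ τ 3)
      simpa using h
    have hlin : A + lam * (x 0 - ξ τ 0) < μ * (y 0 - ξ τ 0) := by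
      have : (μ - lam) * ξ τ 0 < μ * y 0 - lam * x 0 - A := by
        have := (lt_div_iff₀ hml).mp hξM1
        linarith [mul_comm (ξ τ 0) (μ - lam)]
      nlinarith
    rw [div_lt_iff₀ hd0]
    linarith
  refine ⟨⟨τh₀, hτh₀, main⟩, ?_⟩
  -- second part: pick the midpoint
  set τ : ℝ := (τmin + τh₀) / 2 with hτdef
  have h1 : τmin < τ := by rw [hτdef]; linarith
  have h2 : τ < τh₀ := by rw [hτdef]; linarith
  have hττ₀ : τ < τ₀ := lt_of_lt_of_le h2 (min_le_right _ _)
  obtain ⟨hd0, hratio⟩ := main τ h1 h2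
  refine ⟨τ, h1, lt_of_lt_of_le hττ₀ hτ₀', ?_, by linarith⟩
  have hS : (0:ℝ) ≤ (y 1 - ξ τ 1) ^ 2 + (y 2 - ξ τ 2) ^ 2 + (y 3 - ξ τ 3) ^ 2 := by
    positivity
  have hsqrt : Real.sqrt ((y 1 - ξ τ 1) ^ 2 + (y 2 - ξ τ 2) ^ 2 + (y 3 - ξ τ 3) ^ 2)
      < y 0 - ξ τ 0 := by
    have := (div_lt_iff₀ hd0).mp hratio
    nlinarith
  have hlt : (y 1 - ξ τ 1) ^ 2 + (y 2 - ξ τ 2) ^ 2 + (y 3 - ξ τ 3) ^ 2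
      < (y 0 - ξ τ 0) ^ 2 := by
    have h := Real.sq_sqrt hS
    nlinarith [Real.sqrt_nonneg ((y 1 - ξ τ 1) ^ 2 + (y 2 - ξ τ 2) ^ 2 + (y 3 - ξ τ 3) ^ 2)]
  simp only [mink]
  nlinarith
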